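/- arXiv:2009.09176 — 6 statements merged into one kernel-verified Lean document; each statement's English description precedes it below -/
import Mathlib

section
/- In the case-(i) model, if Var(ε₁) > 0, then the ratio t = cov(x_i, x_k)/cov(x_j, x_k) equals γ·β·Var(ε₁)/(β²·θ·Var(ε₁) + θ·Var(ε₂)), and t ≠ 0. -/
open MeasureTheory ProbabilityTheory
open scoped NNReal

/-- Covariance of two real-valued random variables. -/
noncomputable def cov {Ω : Type*} [MeasurableSpace Ω] (μ : Measure Ω) (X Y : Ω → ℝ) : ℝ :=
  ∫ ω, (X ω - μ[X]) * (Y ω - μ[Y]) ∂μ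

/-- Variance of a real-valued random variable. -/
noncomputable def Var {Ω : Type*} [MeasurableSpace Ω] (μ : Measure Ω) (X : Ω → ℝ) : ℝ :=
  cov μ X X

lemma indep_mul_zero {Ω : Type*} [MeasurableSpace Ω] {μ : Measure Ω} {X Y : Ω → ℝ}
    (hXY : IndepFun X Y μ) (hX : Integrable X μ) (hY : Integrable Y μ)
    (h : μ[X] = 0) : ∫ ω, X ω * Y ω ∂μ = 0 := by
  have := hXY.integral_mul_eq_mul_integral hX.aestronglyMeasurable hY.aestronglyMeasurable
  simpa [Pi.mul_apply, h] using this

/-- In the case-(i) model with `Var(ε₁) > 0`, the ratio `t = cov(x_i,x_k)/cov(x_j,x_k)`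
equals `γβ·Var(ε₁)/(β²θ·Var(ε₁) + θ·Var(ε₂))` and is nonzero. -/
theorem caseI_ratio {Ω : Type*} [MeasurableSpace Ω] (μ : Measure Ω) [IsProbabilityMeasure μ]
    (ε₁ ε₂ ei ej ek : Ω → ℝ)
    (hm₁ : Measurable ε₁) (hm₂ : Measurable ε₂)
    (hmi : Measurable ei) (hmj : Measurable ej) (hmk : Measurable ek)
    (hL₁ : MemLp ε₁ 2 μ) (hL₂ : MemLp ε₂ 2 μ)
    (hLi : MemLp ei 2 μ) (hLj : MemLp ej 2 μ) (hLk : MemLp ek 2 μ)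
    (hz₁ : μ[ε₁] = 0) (hz₂ : μ[ε₂] = 0)
    (hzi : μ[ei] = 0) (hzj : μ[ej] = 0) (hzk : μ[ek] = 0)
    (hindep : iIndepFun ![ε₁, ε₂, ei, ej, ek] μ)
    (β γ θ η : ℝ) (hβ : β ≠ 0) (hγ : γ ≠ 0) (hθ : θ ≠ 0) (hη : η ≠ 0)
    (xi xj xk : Ω → ℝ)
    (hxi : xi = fun ω => γ * ε₁ ω + ei ω)
    (hxj : xj = fun ω => β * θ * ε₁ ω + θ * ε₂ ω + ej ω)
    (hxk : xk = fun ω => β * η * ε₁ ω + η * ε₂ ω + ek ω)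
    (hV₁ : 0 < Var μ ε₁) :
    cov μ xi xk / cov μ xj xk
        = γ * β * Var μ ε₁ / (β ^ 2 * θ * Var μ ε₁ + θ * Var μ ε₂) ∧
      cov μ xi xk / cov μ xj xk ≠ 0 := by
  have one_le_two : (1 : ENNReal) ≤ 2 := by norm_num
  have hI1 : Integrable ε₁ μ := hL₁.integrable one_le_two
  have hI2 : Integrable ε₂ μ := hL₂.integrable one_le_two
  have hIi : Integrable ei μ := hLi.integrable one_le_two
  have hIj : Integrable ej μ := hLj.integrable one_le_two
  have hIk : Integrable ek μ := hLk.integrable one_le_two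
  -- pairwise independence
  have h12 : IndepFun ε₁ ε₂ μ := hindep.indepFun (show (0:Fin 5) ≠ 1 by decide)
  have h1i : IndepFun ε₁ ei μ := hindep.indepFun (show (0:Fin 5) ≠ 2 by decide)
  have h1k : IndepFun ε₁ ek μ := hindep.indepFun (show (0:Fin 5) ≠ 4 by decide)
  have h2k : IndepFun ε₂ ek μ := hindep.indepFun (show (1:Fin 5) ≠ 4 by decide)
  have h2i : IndepFun ε₂ ei μ := hindep.indepFun (show (1:Fin 5) ≠ 2 by decide)
  have hik : IndepFun ei ek μ := hindep.indepFun (show (2:Fin 5) ≠ 4 by decide)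
  -- variances as integrals
  have hVar1 : Var μ ε₁ = ∫ ω, ε₁ ω * ε₁ ω ∂μ := by
    simp [Var, cov, hz₁]
  have hVar2 : Var μ ε₂ = ∫ ω, ε₂ ω * ε₂ ω ∂μ := by
    simp [Var, cov, hz₂]
  set V1 := ∫ ω, ε₁ ω * ε₁ ω ∂μ with hV1def
  set V2 := ∫ ω, ε₂ ω * ε₂ ω ∂μ with hV2def
  have hIsq1 : Integrable (fun ω => ε₁ ω * ε₁ ω) μ := by
    simpa [sq] using hL₁.integrable_sq
  have hIsq2 : Integrable (fun ω => ε₂ ω * ε₂ ω) μ := by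
    simpa [sq] using hL₂.integrable_sq
  -- cross product integrals vanish
  have c12 : ∫ ω, ε₁ ω * ε₂ ω ∂μ = 0 := indep_mul_zero h12 hI1 hI2 hz₁
  have c1k : ∫ ω, ε₁ ω * ek ω ∂μ = 0 := indep_mul_zero h1k hI1 hIk hz₁
  have ci1 : ∫ ω, ei ω * ε₁ ω ∂μ = 0 := indep_mul_zero h1i.symm hIi hI1 hzi
  have ci2 : ∫ ω, ei ω * ε₂ ω ∂μ = 0 := indep_mul_zero h2i.symm hIi hI2 hzi
  have cik : ∫ ω, ei ω * ek ω ∂μ = 0 := indep_mul_zero hik hIi hIk hzi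
  have c2k : ∫ ω, ε₂ ω * ek ω ∂μ = 0 := indep_mul_zero h2k hI2 hIk hz₂
  have cj1 : ∫ ω, ej ω * ε₁ ω ∂μ = 0 := by
    have h1j : IndepFun ε₁ ej μ := hindep.indepFun (show (0:Fin 5) ≠ 3 by decide)
    exact indep_mul_zero h1j.symm hIj hI1 hzj
  have cj2 : ∫ ω, ej ω * ε₂ ω ∂μ = 0 := by
    have h2j : IndepFun ε₂ ej μ := hindep.indepFun (show (1:Fin 5) ≠ 3 by decide)
    exact indep_mul_zero h2j.symm hIj hI2 hzj
  have cjk : ∫ ω, ej ω * ek ω ∂μ = 0 := by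
    have hjk : IndepFun ej ek μ := hindep.indepFun (show (3:Fin 5) ≠ 4 by decide)
    exact indep_mul_zero hjk hIj hIk hzj
  have hI12 : Integrable (fun ω => ε₁ ω * ε₂ ω) μ := h12.integrable_mul hI1 hI2
  have hI1k : Integrable (fun ω => ε₁ ω * ek ω) μ := h1k.integrable_mul hI1 hIk
  have hIi1 : Integrable (fun ω => ei ω * ε₁ ω) μ := h1i.symm.integrable_mul hIi hI1
  have hIi2 : Integrable (fun ω => ei ω * ε₂ ω) μ := h2i.symm.integrable_mul hIi hI2
  have hIik : Integrable (fun ω => ei ω * ek ω) μ := hik.integrable_mul hIi hIk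
  have hI2k : Integrable (fun ω => ε₂ ω * ek ω) μ := h2k.integrable_mul hI2 hIk
  have hIj1 : Integrable (fun ω => ej ω * ε₁ ω) μ :=
    (hindep.indepFun (show (0:Fin 5) ≠ 3 by decide)).symm.integrable_mul hIj hI1
  have hIj2 : Integrable (fun ω => ej ω * ε₂ ω) μ :=
    (hindep.indepFun (show (1:Fin 5) ≠ 3 by decide)).symm.integrable_mul hIj hI2
  have hIjk : Integrable (fun ω => ej ω * ek ω) μ :=
    (hindep.indepFun (show (3:Fin 5) ≠ 4 by decide)).integrable_mul hIj hIk
  -- means of xi, xj, xk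
  have hmxi : μ[xi] = 0 := by
    rw [hxi, integral_add (hI1.const_mul γ) hIi, integral_const_mul, hz₁, hzi]; ring
  have hj0 : Integrable (fun ω => β * θ * ε₁ ω + θ * ε₂ ω) μ :=
    (hI1.const_mul _).add (hI2.const_mul _)
  have hk0 : Integrable (fun ω => β * η * ε₁ ω + η * ε₂ ω) μ :=
    (hI1.const_mul _).add (hI2.const_mul _)
  have hmxj : μ[xj] = 0 := by
    rw [hxj, integral_add hj0 hIj, integral_add (hI1.const_mul (β*θ)) (hI2.const_mul θ),
      integral_const_mul, integral_const_mul, hz₁, hz₂, hzj]; ring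
  have hmxk : μ[xk] = 0 := by
    rw [hxk, integral_add hk0 hIk, integral_add (hI1.const_mul (β*η)) (hI2.const_mul η),
      integral_const_mul, integral_const_mul, hz₁, hz₂, hzk]; ring
  -- cov xi xk
  have covik : cov μ xi xk = γ * β * η * V1 := by
    have hexp : ∀ ω, (xi ω - μ[xi]) * (xk ω - μ[xk])
        = γ*(β*η) * (ε₁ ω * ε₁ ω) + (γ*η*(ε₁ ω * ε₂ ω) + (γ*(ε₁ ω * ek ω)
          + ((β*η)*(ei ω * ε₁ ω) + (η*(ei ω * ε₂ ω) + ei ω * ek ω)))) := by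
      intro ω; rw [hmxi, hmxk, hxi, hxk]; ring
    have hA5 : Integrable (fun ω => η*(ei ω * ε₂ ω) + ei ω * ek ω) μ :=
      (hIi2.const_mul _).add hIik
    have hA4 : Integrable (fun ω => (β*η)*(ei ω * ε₁ ω) + (η*(ei ω * ε₂ ω) + ei ω * ek ω)) μ :=
      (hIi1.const_mul _).add hA5
    have hA3 : Integrable (fun ω => γ*(ε₁ ω * ek ω)
        + ((β*η)*(ei ω * ε₁ ω) + (η*(ei ω * ε₂ ω) + ei ω * ek ω))) μ :=
      (hI1k.const_mul _).add hA4
    have hA2 : Integrable (fun ω => γ*η*(ε₁ ω * ε₂ ω) + (γ*(ε₁ ω * ek ω)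
        + ((β*η)*(ei ω * ε₁ ω) + (η*(ei ω * ε₂ ω) + ei ω * ek ω)))) μ :=
      (hI12.const_mul _).add hA3
    rw [cov]
    simp_rw [hexp]
    rw [integral_add (hIsq1.const_mul _) hA2,
      integral_add (hI12.const_mul _) hA3,
      integral_add (hI1k.const_mul _) hA4,
      integral_add (hIi1.const_mul _) hA5,
      integral_add (hIi2.const_mul _) hIik]
    simp only [integral_const_mul, c12, c1k, ci1, ci2, cik]
    rw [hV1def]; ring
  -- cov xj xk
  have covjk : cov μ xj xk = η * (β^2*θ*V1 + θ*V2) := by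
    have hexp : ∀ ω, (xj ω - μ[xj]) * (xk ω - μ[xk])
        = (β*θ)*(β*η) * (ε₁ ω * ε₁ ω) + ((β*θ*η + θ*(β*η))*(ε₁ ω * ε₂ ω) + ((β*θ)*(ε₁ ω * ek ω)
          + (θ*η*(ε₂ ω * ε₂ ω) + (θ*(ε₂ ω * ek ω)
          + ((β*η)*(ej ω * ε₁ ω) + (η*(ej ω * ε₂ ω) + ej ω * ek ω)))))) := by
      intro ω; rw [hmxj, hmxk, hxj, hxk]; ring
    have hB7 : Integrable (fun ω => η*(ej ω * ε₂ ω) + ej ω * ek ω) μ :=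
      (hIj2.const_mul _).add hIjk
    have hB6 : Integrable (fun ω => (β*η)*(ej ω * ε₁ ω) + (η*(ej ω * ε₂ ω) + ej ω * ek ω)) μ :=
      (hIj1.const_mul _).add hB7
    have hB5 : Integrable (fun ω => θ*(ε₂ ω * ek ω)
        + ((β*η)*(ej ω * ε₁ ω) + (η*(ej ω * ε₂ ω) + ej ω * ek ω))) μ :=
      (hI2k.const_mul _).add hB6
    have hB4 : Integrable (fun ω => θ*η*(ε₂ ω * ε₂ ω) + (θ*(ε₂ ω * ek ω)
        + ((β*η)*(ej ω * ε₁ ω) + (η*(ej ω * ε₂ ω) + ej ω * ek ω)))) μ :=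
      (hIsq2.const_mul _).add hB5
    have hB3 : Integrable (fun ω => (β*θ)*(ε₁ ω * ek ω)
        + (θ*η*(ε₂ ω * ε₂ ω) + (θ*(ε₂ ω * ek ω)
        + ((β*η)*(ej ω * ε₁ ω) + (η*(ej ω * ε₂ ω) + ej ω * ek ω))))) μ :=
      (hI1k.const_mul _).add hB4
    have hB2 : Integrable (fun ω => (β*θ*η + θ*(β*η))*(ε₁ ω * ε₂ ω) + ((β*θ)*(ε₁ ω * ek ω)
        + (θ*η*(ε₂ ω * ε₂ ω) + (θ*(ε₂ ω * ek ω)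
        + ((β*η)*(ej ω * ε₁ ω) + (η*(ej ω * ε₂ ω) + ej ω * ek ω)))))) μ :=
      (hI12.const_mul _).add hB3
    rw [cov]
    simp_rw [hexp]
    rw [integral_add (hIsq1.const_mul _) hB2,
      integral_add (hI12.const_mul _) hB3,
      integral_add (hI1k.const_mul _) hB4,
      integral_add (hIsq2.const_mul _) hB5,
      integral_add (hI2k.const_mul _) hB6,
      integral_add (hIj1.const_mul _) hB7,
      integral_add (hIj2.const_mul _) hIjk]
    simp only [integral_const_mul, c12, c1k, c2k, cj1, cj2, cjk]
    rw [hV1def, hV2def]; ring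
  have hV1pos : 0 < V1 := by rwa [hVar1] at hV₁
  have hV2nn : 0 ≤ V2 := integral_nonneg (fun ω => mul_self_nonneg _)
  have hden : β^2*θ*V1 + θ*V2 ≠ 0 := by
    have : β^2*θ*V1 + θ*V2 = θ*(β^2*V1 + V2) := by ring
    rw [this]
    exact mul_ne_zero hθ (by positivity)
  have hratio : cov μ xi xk / cov μ xj xk = γ * β * V1 / (β^2*θ*V1 + θ*V2) := by
    rw [covik, covjk]
    rw [show γ * β * η * V1 = η * (γ * β * V1) by ring]
    rw [mul_div_mul_left _ _ hη]
  refine ⟨by rw [hratio, hVar1, hVar2], ?_⟩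
  rw [hratio]
  exact div_ne_zero (by positivity) hden
end

section
/- In the case-(ii) model, cov(x_i, x_k) = β·γ·η·Var(ε₂) and cov(x_j, x_k) = θ·η·Var(ε₂); in particular, if Var(ε₂) > 0 then cov(x_i, x_k)/cov(x_j, x_k) = β·γ/θ. -/
open MeasureTheory ProbabilityTheory
open scoped NNReal

/-- In the case-(ii) model, `cov(x_i, x_k) = βγη·Var(ε₂)` and `cov(x_j, x_k) = θη·Var(ε₂)`;
in particular, if `Var(ε₂) > 0` then `cov(x_i,x_k)/cov(x_j,x_k) = βγ/θ`. -/
theorem caseII_cov {Ω : Type*} [MeasurableSpace Ω] (μ : Measure Ω) [IsProbabilityMeasure μ]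
    (ε₁ ε₂ ei ej ek : Ω → ℝ)
    (hm₁ : Measurable ε₁) (hm₂ : Measurable ε₂)
    (hmi : Measurable ei) (hmj : Measurable ej) (hmk : Measurable ek)
    (hL₁ : MemLp ε₁ 2 μ) (hL₂ : MemLp ε₂ 2 μ)
    (hLi : MemLp ei 2 μ) (hLj : MemLp ej 2 μ) (hLk : MemLp ek 2 μ)
    (hz₁ : μ[ε₁] = 0) (hz₂ : μ[ε₂] = 0)
    (hzi : μ[ei] = 0) (hzj : μ[ej] = 0) (hzk : μ[ek] = 0)
    (hindep : iIndepFun ![ε₁, ε₂, ei, ej, ek] μ)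
    (β γ θ η : ℝ) (hβ : β ≠ 0) (hγ : γ ≠ 0) (hθ : θ ≠ 0) (hη : η ≠ 0)
    (xi xj xk : Ω → ℝ)
    (hxi : xi = fun ω => β * γ * ε₂ ω + γ * ε₁ ω + ei ω)
    (hxj : xj = fun ω => θ * ε₂ ω + ej ω)
    (hxk : xk = fun ω => η * ε₂ ω + ek ω) :
    cov μ xi xk = β * γ * η * Var μ ε₂ ∧
      cov μ xj xk = θ * η * Var μ ε₂ ∧
      (0 < Var μ ε₂ → cov μ xi xk / cov μ xj xk = β * γ / θ) := by
  have one_le_two : (1 : ENNReal) ≤ 2 := by norm_num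
  have hI₁ : Integrable ε₁ μ := hL₁.integrable one_le_two
  have hI₂ : Integrable ε₂ μ := hL₂.integrable one_le_two
  have hIi : Integrable ei μ := hLi.integrable one_le_two
  have hIj : Integrable ej μ := hLj.integrable one_le_two
  have hIk : Integrable ek μ := hLk.integrable one_le_two
  -- pairwise independences
  have h₁₂ : IndepFun ε₁ ε₂ μ := by
    simpa using hindep.indepFun (show (0:Fin 5) ≠ 1 by decide)
  have h₁k : IndepFun ε₁ ek μ := by
    simpa using hindep.indepFun (show (0:Fin 5) ≠ 4 by decide)
  have h₂i : IndepFun ε₂ ei μ := by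
    simpa using hindep.indepFun (show (1:Fin 5) ≠ 2 by decide)
  have h₂j : IndepFun ε₂ ej μ := by
    simpa using hindep.indepFun (show (1:Fin 5) ≠ 3 by decide)
  have h₂k : IndepFun ε₂ ek μ := by
    simpa using hindep.indepFun (show (1:Fin 5) ≠ 4 by decide)
  have hik : IndepFun ei ek μ := by
    simpa using hindep.indepFun (show (2:Fin 5) ≠ 4 by decide)
  have hjk : IndepFun ej ek μ := by
    simpa using hindep.indepFun (show (3:Fin 5) ≠ 4 by decide)
  -- cross terms
  have cross : ∀ (X Y : Ω → ℝ), IndepFun X Y μ → AEStronglyMeasurable X μ →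
      AEStronglyMeasurable Y μ → μ[X] = 0 → (∫ ω, X ω * Y ω ∂μ) = 0 := by
    intro X Y h hX hY hz
    rw [h.integral_fun_mul_eq_mul_integral hX hY, hz, zero_mul]
  have c₁₂ : (∫ ω, ε₁ ω * ε₂ ω ∂μ) = 0 :=
    cross _ _ h₁₂ hm₁.aestronglyMeasurable hm₂.aestronglyMeasurable hz₁
  have c₁k : (∫ ω, ε₁ ω * ek ω ∂μ) = 0 :=
    cross _ _ h₁k hm₁.aestronglyMeasurable hmk.aestronglyMeasurable hz₁
  have c₂i : (∫ ω, ε₂ ω * ei ω ∂μ) = 0 :=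
    cross _ _ h₂i hm₂.aestronglyMeasurable hmi.aestronglyMeasurable hz₂
  have c₂j : (∫ ω, ε₂ ω * ej ω ∂μ) = 0 :=
    cross _ _ h₂j hm₂.aestronglyMeasurable hmj.aestronglyMeasurable hz₂
  have c₂k : (∫ ω, ε₂ ω * ek ω ∂μ) = 0 :=
    cross _ _ h₂k hm₂.aestronglyMeasurable hmk.aestronglyMeasurable hz₂
  have cik : (∫ ω, ei ω * ek ω ∂μ) = 0 :=
    cross _ _ hik hmi.aestronglyMeasurable hmk.aestronglyMeasurable hzi
  have cjk : (∫ ω, ej ω * ek ω ∂μ) = 0 :=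
    cross _ _ hjk hmj.aestronglyMeasurable hmk.aestronglyMeasurable hzj
  -- integrabilities of products
  have hIsq : Integrable (fun ω => ε₂ ω * ε₂ ω) μ := by
    simpa [pow_two] using hL₂.integrable_sq
  have hP₁₂ : Integrable (fun ω => ε₁ ω * ε₂ ω) μ := h₁₂.integrable_mul hI₁ hI₂
  have hP₁k : Integrable (fun ω => ε₁ ω * ek ω) μ := h₁k.integrable_mul hI₁ hIk
  have hP₂i : Integrable (fun ω => ε₂ ω * ei ω) μ := h₂i.integrable_mul hI₂ hIi
  have hP₂j : Integrable (fun ω => ε₂ ω * ej ω) μ := h₂j.integrable_mul hI₂ hIj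
  have hP₂k : Integrable (fun ω => ε₂ ω * ek ω) μ := h₂k.integrable_mul hI₂ hIk
  have hPik : Integrable (fun ω => ei ω * ek ω) μ := hik.integrable_mul hIi hIk
  have hPjk : Integrable (fun ω => ej ω * ek ω) μ := hjk.integrable_mul hIj hIk
  -- Var ε₂
  have hVar : Var μ ε₂ = ∫ ω, ε₂ ω * ε₂ ω ∂μ := by
    simp [Var, cov, hz₂]
  -- means of xi, xj, xk
  have hA1 : Integrable (fun ω => β * γ * ε₂ ω + γ * ε₁ ω) μ :=
    (hI₂.const_mul _).add (hI₁.const_mul _)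
  have hExi : μ[xi] = 0 := by
    rw [hxi]
    rw [integral_add hA1 hIi, integral_add (hI₂.const_mul _) (hI₁.const_mul _),
      integral_const_mul, integral_const_mul, hz₁, hz₂, hzi]
    ring
  have hExj : μ[xj] = 0 := by
    rw [hxj]
    rw [integral_add (hI₂.const_mul _) hIj, integral_const_mul, hz₂, hzj]
    ring
  have hExk : μ[xk] = 0 := by
    rw [hxk]
    rw [integral_add (hI₂.const_mul _) hIk, integral_const_mul, hz₂, hzk]
    ring
  have H1 : cov μ xi xk = β * γ * η * Var μ ε₂ := by
    rw [cov, hExi, hExk, hVar]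
    simp only [sub_zero, hxi, hxk]
    have hfe : ∀ ω, (β * γ * ε₂ ω + γ * ε₁ ω + ei ω) * (η * ε₂ ω + ek ω) =
        β * γ * η * (ε₂ ω * ε₂ ω) + β * γ * (ε₂ ω * ek ω) + γ * η * (ε₁ ω * ε₂ ω)
          + γ * (ε₁ ω * ek ω) + η * (ε₂ ω * ei ω) + ei ω * ek ω := by
      intro ω; ring
    rw [integral_congr_ae (Filter.Eventually.of_forall hfe)]
    have hB1 : Integrable (fun ω => β * γ * η * (ε₂ ω * ε₂ ω) + β * γ * (ε₂ ω * ek ω)) μ :=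
      (hIsq.const_mul _).add (hP₂k.const_mul _)
    have hB2 : Integrable (fun ω => β * γ * η * (ε₂ ω * ε₂ ω) + β * γ * (ε₂ ω * ek ω)
        + γ * η * (ε₁ ω * ε₂ ω)) μ := hB1.add (hP₁₂.const_mul _)
    have hB3 : Integrable (fun ω => β * γ * η * (ε₂ ω * ε₂ ω) + β * γ * (ε₂ ω * ek ω)
        + γ * η * (ε₁ ω * ε₂ ω) + γ * (ε₁ ω * ek ω)) μ := hB2.add (hP₁k.const_mul _)
    have hB4 : Integrable (fun ω => β * γ * η * (ε₂ ω * ε₂ ω) + β * γ * (ε₂ ω * ek ω)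
        + γ * η * (ε₁ ω * ε₂ ω) + γ * (ε₁ ω * ek ω) + η * (ε₂ ω * ei ω)) μ :=
      hB3.add (hP₂i.const_mul _)
    rw [integral_add hB4 hPik, integral_add hB3 (hP₂i.const_mul _),
      integral_add hB2 (hP₁k.const_mul _), integral_add hB1 (hP₁₂.const_mul _),
      integral_add (hIsq.const_mul _) (hP₂k.const_mul _),
      integral_const_mul, integral_const_mul, integral_const_mul, integral_const_mul,
      integral_const_mul, c₂k, c₁₂, c₁k, c₂i, cik]
    ring
  have H2 : cov μ xj xk = θ * η * Var μ ε₂ := by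
    rw [cov, hExj, hExk, hVar]
    simp only [sub_zero, hxj, hxk]
    have hfe : ∀ ω, (θ * ε₂ ω + ej ω) * (η * ε₂ ω + ek ω) =
        θ * η * (ε₂ ω * ε₂ ω) + θ * (ε₂ ω * ek ω) + η * (ε₂ ω * ej ω) + ej ω * ek ω := by
      intro ω; ring
    rw [integral_congr_ae (Filter.Eventually.of_forall hfe)]
    have hC1 : Integrable (fun ω => θ * η * (ε₂ ω * ε₂ ω) + θ * (ε₂ ω * ek ω)) μ :=
      (hIsq.const_mul _).add (hP₂k.const_mul _)
    have hC2 : Integrable (fun ω => θ * η * (ε₂ ω * ε₂ ω) + θ * (ε₂ ω * ek ω)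
        + η * (ε₂ ω * ej ω)) μ := hC1.add (hP₂j.const_mul _)
    rw [integral_add hC2 hPjk, integral_add hC1 (hP₂j.const_mul _),
      integral_add (hIsq.const_mul _) (hP₂k.const_mul _),
      integral_const_mul, integral_const_mul, integral_const_mul, c₂k, c₂j, cjk]
    ring
  refine ⟨H1, H2, fun hpos => ?_⟩
  rw [H1, H2]
  field_simp
end

section
/- (Corollary 1, backward direction.) In the case-(ii) model with Var(ε₂) > 0, the pseudo-residual E_{(i,j|k)} and x_k are independent random variables; that is, {x_i, x_j} and {x_k} satisfy the Triad constraint. -/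
open MeasureTheory ProbabilityTheory
open scoped NNReal

/-- Corollary 1, backward direction: in the case-(ii) model with `Var(ε₂) > 0`, the
pseudo-residual `E_{(i,j|k)}` and `x_k` are independent, i.e. `{x_i, x_j}` and `{x_k}`
satisfy the Triad constraint. -/
theorem caseII_triad_satisfied {Ω : Type*} [MeasurableSpace Ω] (μ : Measure Ω)
    [IsProbabilityMeasure μ]
    (ε₁ ε₂ ei ej ek : Ω → ℝ)
    (hm₁ : Measurable ε₁) (hm₂ : Measurable ε₂)
    (hmi : Measurable ei) (hmj : Measurable ej) (hmk : Measurable ek)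
    (hL₁ : MemLp ε₁ 2 μ) (hL₂ : MemLp ε₂ 2 μ)
    (hLi : MemLp ei 2 μ) (hLj : MemLp ej 2 μ) (hLk : MemLp ek 2 μ)
    (hz₁ : μ[ε₁] = 0) (hz₂ : μ[ε₂] = 0)
    (hzi : μ[ei] = 0) (hzj : μ[ej] = 0) (hzk : μ[ek] = 0)
    (hindep : iIndepFun ![ε₁, ε₂, ei, ej, ek] μ)
    (β γ θ η : ℝ) (hβ : β ≠ 0) (hγ : γ ≠ 0) (hθ : θ ≠ 0) (hη : η ≠ 0)
    (xi xj xk : Ω → ℝ)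
    (hxi : xi = fun ω => β * γ * ε₂ ω + γ * ε₁ ω + ei ω)
    (hxj : xj = fun ω => θ * ε₂ ω + ej ω)
    (hxk : xk = fun ω => η * ε₂ ω + ek ω)
    (hV₂ : 0 < Var μ ε₂) :
    IndepFun (fun ω => xi ω - (cov μ xi xk / cov μ xj xk) * xj ω) xk μ := by
  -- integrability
  have I₁ : Integrable ε₁ μ := hL₁.integrable one_le_two
  have I₂ : Integrable ε₂ μ := hL₂.integrable one_le_two
  have Ii : Integrable ei μ := hLi.integrable one_le_two
  have Ij : Integrable ej μ := hLj.integrable one_le_two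
  have Ik : Integrable ek μ := hLk.integrable one_le_two
  -- pairwise independences
  have h12 : IndepFun ε₁ ε₂ μ := hindep.indepFun (show (0:Fin 5) ≠ 1 by decide)
  have h1k : IndepFun ε₁ ek μ := hindep.indepFun (show (0:Fin 5) ≠ 4 by decide)
  have h2i : IndepFun ε₂ ei μ := hindep.indepFun (show (1:Fin 5) ≠ 2 by decide)
  have h2j : IndepFun ε₂ ej μ := hindep.indepFun (show (1:Fin 5) ≠ 3 by decide)
  have h2k : IndepFun ε₂ ek μ := hindep.indepFun (show (1:Fin 5) ≠ 4 by decide)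
  have hik : IndepFun ei ek μ := hindep.indepFun (show (2:Fin 5) ≠ 4 by decide)
  have hjk : IndepFun ej ek μ := hindep.indepFun (show (3:Fin 5) ≠ 4 by decide)
  -- zero cross moments
  have cross : ∀ (f g : Ω → ℝ), Integrable f μ → Integrable g μ → IndepFun f g μ →
      μ[f] = 0 → ∫ ω, f ω * g ω ∂μ = 0 := by
    intro f g If Ig h hz
    have := h.integral_mul_eq_mul_integral If.aestronglyMeasurable Ig.aestronglyMeasurable
    simpa [hz] using this
  have m12 := cross _ _ I₁ I₂ h12 hz₁
  have m1k := cross _ _ I₁ Ik h1k hz₁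
  have m2i := cross _ _ I₂ Ii h2i hz₂
  have m2j := cross _ _ I₂ Ij h2j hz₂
  have m2k := cross _ _ I₂ Ik h2k hz₂
  have mik := cross _ _ Ii Ik hik hzi
  have mjk := cross _ _ Ij Ik hjk hzj
  -- integrable products
  have P22 : Integrable (fun ω => ε₂ ω * ε₂ ω) μ := by
    simpa [pow_two] using hL₂.integrable_sq
  have P12 : Integrable (fun ω => ε₁ ω * ε₂ ω) μ := h12.integrable_mul I₁ I₂
  have P1k : Integrable (fun ω => ε₁ ω * ek ω) μ := h1k.integrable_mul I₁ Ik
  have P2i : Integrable (fun ω => ε₂ ω * ei ω) μ := h2i.integrable_mul I₂ Ii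
  have P2j : Integrable (fun ω => ε₂ ω * ej ω) μ := h2j.integrable_mul I₂ Ij
  have P2k : Integrable (fun ω => ε₂ ω * ek ω) μ := h2k.integrable_mul I₂ Ik
  have Pik : Integrable (fun ω => ei ω * ek ω) μ := hik.integrable_mul Ii Ik
  have Pjk : Integrable (fun ω => ej ω * ek ω) μ := hjk.integrable_mul Ij Ik
  set V : ℝ := ∫ ω, ε₂ ω * ε₂ ω ∂μ with hV
  -- means of x's
  have Ia : Integrable (fun ω => β * γ * ε₂ ω) μ := I₂.const_mul _
  have Ib : Integrable (fun ω => γ * ε₁ ω) μ := I₁.const_mul _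
  have Iab : Integrable (fun ω => β * γ * ε₂ ω + γ * ε₁ ω) μ := Ia.add Ib
  have exi : μ[xi] = 0 := by
    rw [hxi, integral_add Iab Ii, integral_add Ia Ib, integral_const_mul, integral_const_mul,
      hz₁, hz₂, hzi]
    ring
  have exj : μ[xj] = 0 := by
    rw [hxj, integral_add ((I₂.const_mul θ : Integrable (fun ω => θ * ε₂ ω) μ)) Ij,
      integral_const_mul, hz₂, hzj]; ring
  have exk : μ[xk] = 0 := by
    rw [hxk, integral_add ((I₂.const_mul η : Integrable (fun ω => η * ε₂ ω) μ)) Ik,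
      integral_const_mul, hz₂, hzk]; ring
  -- covariances
  have cik : cov μ xi xk = β * γ * η * V := by
    rw [cov, exi, exk]
    have hfun : (fun ω => (xi ω - 0) * (xk ω - 0)) = fun ω =>
        (β*γ*η) * (ε₂ ω * ε₂ ω) + (β*γ) * (ε₂ ω * ek ω) + (γ*η) * (ε₁ ω * ε₂ ω)
        + γ * (ε₁ ω * ek ω) + η * (ε₂ ω * ei ω) + ei ω * ek ω := by
      funext ω; rw [hxi, hxk]; ring
    have A1 : Integrable (fun ω => (β*γ*η) * (ε₂ ω * ε₂ ω)) μ := P22.const_mul _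
    have A2 : Integrable (fun ω => (β*γ) * (ε₂ ω * ek ω)) μ := P2k.const_mul _
    have A3 : Integrable (fun ω => (γ*η) * (ε₁ ω * ε₂ ω)) μ := P12.const_mul _
    have A4 : Integrable (fun ω => γ * (ε₁ ω * ek ω)) μ := P1k.const_mul _
    have A5 : Integrable (fun ω => η * (ε₂ ω * ei ω)) μ := P2i.const_mul _
    have B1 : Integrable (fun ω => (β*γ*η) * (ε₂ ω * ε₂ ω) + (β*γ) * (ε₂ ω * ek ω)) μ := A1.add A2
    have B2 : Integrable (fun ω => (β*γ*η) * (ε₂ ω * ε₂ ω) + (β*γ) * (ε₂ ω * ek ω)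
        + (γ*η) * (ε₁ ω * ε₂ ω)) μ := B1.add A3
    have B3 : Integrable (fun ω => (β*γ*η) * (ε₂ ω * ε₂ ω) + (β*γ) * (ε₂ ω * ek ω)
        + (γ*η) * (ε₁ ω * ε₂ ω) + γ * (ε₁ ω * ek ω)) μ := B2.add A4
    have B4 : Integrable (fun ω => (β*γ*η) * (ε₂ ω * ε₂ ω) + (β*γ) * (ε₂ ω * ek ω)
        + (γ*η) * (ε₁ ω * ε₂ ω) + γ * (ε₁ ω * ek ω) + η * (ε₂ ω * ei ω)) μ := B3.add A5
    rw [hfun, integral_add B4 Pik, integral_add B3 A5, integral_add B2 A4, integral_add B1 A3,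
      integral_add A1 A2, integral_const_mul, integral_const_mul, integral_const_mul,
      integral_const_mul, integral_const_mul, m12, m1k, m2i, m2k, mik]
    ring
  have cjk : cov μ xj xk = θ * η * V := by
    rw [cov, exj, exk]
    have hfun : (fun ω => (xj ω - 0) * (xk ω - 0)) = fun ω =>
        (θ*η) * (ε₂ ω * ε₂ ω) + θ * (ε₂ ω * ek ω) + η * (ε₂ ω * ej ω) + ej ω * ek ω := by
      funext ω; rw [hxj, hxk]; ring
    have A1 : Integrable (fun ω => (θ*η) * (ε₂ ω * ε₂ ω)) μ := P22.const_mul _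
    have A2 : Integrable (fun ω => θ * (ε₂ ω * ek ω)) μ := P2k.const_mul _
    have A3 : Integrable (fun ω => η * (ε₂ ω * ej ω)) μ := P2j.const_mul _
    have B1 : Integrable (fun ω => (θ*η) * (ε₂ ω * ε₂ ω) + θ * (ε₂ ω * ek ω)) μ := A1.add A2
    have B2 : Integrable (fun ω => (θ*η) * (ε₂ ω * ε₂ ω) + θ * (ε₂ ω * ek ω)
        + η * (ε₂ ω * ej ω)) μ := B1.add A3
    rw [hfun, integral_add B2 Pjk, integral_add B1 A3, integral_add A1 A2,
      integral_const_mul, integral_const_mul, integral_const_mul, m2j, m2k, mjk]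
    ring
  have hVpos : 0 < V := by
    have : Var μ ε₂ = V := by
      rw [Var, cov, hz₂]; simp; rfl
    linarith [hV₂, this ▸ hV₂]
  have hVne : V ≠ 0 := ne_of_gt hVpos
  have hc : cov μ xi xk / cov μ xj xk = β * γ / θ := by
    rw [cik, cjk]
    field_simp
  -- the residual only depends on (ε₁, ei, ej)
  have hres : (fun ω => xi ω - (cov μ xi xk / cov μ xj xk) * xj ω)
      = fun ω => γ * ε₁ ω + ei ω - (β * γ / θ) * ej ω := by
    funext ω
    rw [hc, hxi, hxj]
    field_simp
    ring
  rw [hres, hxk]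
  -- independence via grouping
  have hgrp : IndepFun (fun ω => (fun i : ({0,2,3} : Finset (Fin 5)) => ![ε₁, ε₂, ei, ej, ek] i ω))
      (fun ω => (fun i : ({1,4} : Finset (Fin 5)) => ![ε₁, ε₂, ei, ej, ek] i ω)) μ := by
    apply hindep.indepFun_finset
    · decide
    · intro i
      fin_cases i <;> simpa using ‹_›
  have φmeas : Measurable (fun v : ({0,2,3} : Finset (Fin 5)) → ℝ =>
      γ * v ⟨0, by decide⟩ + v ⟨2, by decide⟩ - (β * γ / θ) * v ⟨3, by decide⟩) := by
    fun_prop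
  have ψmeas : Measurable (fun v : ({1,4} : Finset (Fin 5)) → ℝ =>
      η * v ⟨1, by decide⟩ + v ⟨4, by decide⟩) := by fun_prop
  have := hgrp.comp φmeas ψmeas
  exact this
end

section
/- Let (ε̄_j)_{j ∈ Fin q} be jointly independent real random variables on a probability space, and let H be a real q × q̃ matrix such that every row of H has exactly one nonzero entry and every column of H has at least one nonzero entry (assumption A4). Define ε̃_i = (Σ_j (H j i)²)⁻¹ · Σ_j (H j i)·ε̄_j for each i ∈ Fin q̃ (these are the components of (HᵀH)⁻¹ Hᵀ ε̄). Then the family (ε̃_i)_{i ∈ Fin q̃} is jointly independent. -/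
open MeasureTheory ProbabilityTheory

/-- Grouping lemma: if `(f j)` are jointly independent and `σ : Fin q → Fin qt`,
then the tuples `(f j)_{j ∈ σ⁻¹ k}` indexed by `k` are jointly independent. -/
theorem iIndepFun_group {Ω : Type*} [MeasurableSpace Ω] (μ : Measure Ω)
    [IsProbabilityMeasure μ] {q qt : ℕ}
    (f : Fin q → Ω → ℝ) (hmeas : ∀ j, Measurable (f j))
    (hindep : iIndepFun f μ) (σ : Fin q → Fin qt) :
    iIndepFun
      (fun k ω => fun j : {j : Fin q // σ j = k} => f j.1 ω) μ := by
  classical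
  rw [iIndepFun_iff_measure_inter_preimage_eq_mul]
  intro S
  induction S using Finset.induction_on with
  | empty => intro sets _; simp
  | @insert k0 S hk0 ih =>
    intro sets hsets
    have hsets' : ∀ k ∈ S, MeasurableSet (sets k) := fun k hk => hsets k (Finset.mem_insert_of_mem hk)
    have hk0set : MeasurableSet (sets k0) := hsets k0 (Finset.mem_insert_self _ _)
    -- the two blocks of indices
    set Sfin : Finset (Fin q) := Finset.univ.filter (fun j => σ j = k0) with hSfin
    set Tfin : Finset (Fin q) := Finset.univ.filter (fun j => σ j ∈ S) with hTfin
    have hdisj : Disjoint Sfin Tfin := by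
      rw [Finset.disjoint_left]
      intro j hjS hjT
      rw [hSfin, Finset.mem_filter] at hjS
      rw [hTfin, Finset.mem_filter] at hjT
      exact hk0 (hjS.2 ▸ hjT.2)
    have hF : IndepFun (fun a (i : Sfin) => f i a) (fun a (i : Tfin) => f i a) μ :=
      hindep.indepFun_finset Sfin Tfin hdisj hmeas
    -- remap for the first block
    let r : ({j : Fin q // j ∈ Sfin} → ℝ) → ({j : Fin q // σ j = k0} → ℝ) :=
      fun x j => x ⟨j.1, by simp [hSfin, j.2]⟩
    have hr : Measurable r :=
      measurable_pi_lambda _ (fun j => measurable_pi_apply _)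
    -- remap for the second block (with junk values off `Tfin`)
    let rB : ∀ k : Fin qt, ({j : Fin q // j ∈ Tfin} → ℝ) → ({j : Fin q // σ j = k} → ℝ) :=
      fun k x j => if h : j.1 ∈ Tfin then x ⟨j.1, h⟩ else 0
    have hrB : ∀ k, Measurable (rB k) := by
      intro k
      apply measurable_pi_lambda
      intro j
      simp only [rB]
      by_cases h : j.1 ∈ Tfin
      · simp only [dif_pos h]
        exact measurable_pi_apply _
      · simp only [dif_neg h]
        exact measurable_const
    set sA : Set ({j : Fin q // j ∈ Sfin} → ℝ) := r ⁻¹' sets k0 with hsA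
    set sB : Set ({j : Fin q // j ∈ Tfin} → ℝ) := ⋂ k ∈ S, rB k ⁻¹' sets k with hsB
    have hsAm : MeasurableSet sA := hr hk0set
    have hsBm : MeasurableSet sB := by
      apply MeasurableSet.biInter (Finset.countable_toSet S)
      intro k hk
      exact hrB k (hsets' k hk)
    -- identification of the preimages
    have hA : (fun a (i : Sfin) => f i a) ⁻¹' sA
        = (fun ω => fun j : {j : Fin q // σ j = k0} => f j.1 ω) ⁻¹' sets k0 := by
      ext ω
      simp only [Set.mem_preimage, hsA]
      rfl
    have hB : (fun a (i : Tfin) => f i a) ⁻¹' sB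
        = ⋂ k ∈ S, (fun ω => fun j : {j : Fin q // σ j = k} => f j.1 ω) ⁻¹' sets k := by
      ext ω
      simp only [Set.mem_preimage, hsB, Set.mem_iInter]
      refine forall_congr' fun k => forall_congr' fun hk => ?_
      have : rB k (fun i : Tfin => f i ω) = fun j : {j : Fin q // σ j = k} => f j.1 ω := by
        funext j
        have hjT : j.1 ∈ Tfin := by simp [hTfin, j.2, hk]
        simp [rB, hjT]
      rw [this]
    have key := (indepFun_iff_measure_inter_preimage_eq_mul.mp hF) sA sB hsAm hsBm
    rw [hA, hB] at key
    have hins : (⋂ k ∈ insert k0 S,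
        (fun ω => fun j : {j : Fin q // σ j = k} => f j.1 ω) ⁻¹' sets k)
        = ((fun ω => fun j : {j : Fin q // σ j = k0} => f j.1 ω) ⁻¹' sets k0)
          ∩ ⋂ k ∈ S, (fun ω => fun j : {j : Fin q // σ j = k} => f j.1 ω) ⁻¹' sets k := by
      simp [Set.biInter_insert]
    rw [hins, key, ih hsets', Finset.prod_insert hk0]

/-- If `(ε̄_j)` are jointly independent and `H` satisfies assumption A4 (each row has
exactly one nonzero entry, each column at least one), then the components
`ε̃_i = (Σ_j (H j i)²)⁻¹ · Σ_j (H j i)·ε̄_j` of `(HᵀH)⁻¹ Hᵀ ε̄` are jointly independent. -/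
theorem iIndepFun_tilde_eps {Ω : Type*} [MeasurableSpace Ω] (μ : Measure Ω)
    [IsProbabilityMeasure μ] {q qt : ℕ}
    (epsbar : Fin q → Ω → ℝ) (hmeas : ∀ j, Measurable (epsbar j))
    (hindep : iIndepFun epsbar μ)
    (H : Matrix (Fin q) (Fin qt) ℝ)
    (hrow : ∀ j : Fin q, ∃! i : Fin qt, H j i ≠ 0)
    (hcol : ∀ i : Fin qt, ∃ j : Fin q, H j i ≠ 0) :
    iIndepFun
      (fun (i : Fin qt) (ω : Ω) => (∑ j, (H j i) ^ 2)⁻¹ * ∑ j, H j i * epsbar j ω) μ := by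
  classical
  -- `σ j` is the unique column with a nonzero entry in row `j`
  let σ : Fin q → Fin qt := fun j => (hrow j).choose
  have hσ : ∀ j i, H j i ≠ 0 → i = σ j := fun j i h => (hrow j).choose_spec.2 i h
  have hzero : ∀ j i, σ j ≠ i → H j i = 0 := by
    intro j i h
    by_contra hne
    exact h ((hσ j i hne).symm)
  -- grouping
  have hgroup := iIndepFun_group μ epsbar hmeas hindep σ
  -- composing functions
  let g : ∀ i : Fin qt, ({j : Fin q // σ j = i} → ℝ) → ℝ :=
    fun i x => (∑ j, (H j i) ^ 2)⁻¹ * ∑ j : {j : Fin q // σ j = i}, H j.1 i * x j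
  have hg : ∀ i, Measurable (g i) := by
    intro i
    apply Measurable.const_mul
    exact Finset.measurable_sum _ (fun j _ => (measurable_pi_apply j).const_mul _)
  have hcomp := hgroup.comp g hg
  have heq : (fun (i : Fin qt) (ω : Ω) => (∑ j, (H j i) ^ 2)⁻¹ * ∑ j, H j i * epsbar j ω)
      = fun i => g i ∘ (fun ω => fun j : {j : Fin q // σ j = i} => epsbar j.1 ω) := by
    funext i ω
    simp only [Function.comp_apply, g]
    congr 1
    rw [← Finset.sum_subtype (Finset.univ.filter (fun j => σ j = i))
      (p := fun j => σ j = i) (by simp) (fun j => H j i * epsbar j ω)]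
    symm
    apply Finset.sum_subset (Finset.filter_subset _ _)
    intro j _ hj
    have : σ j ≠ i := by simpa using hj
    rw [hzero j i this, zero_mul]
  rw [heq]
  exact hcomp
end

section
/- Let A be a real n × n matrix all of whose entries are nonnegative. Then trace(exp(A)) = n if and only if A is nilpotent. In particular, for any real q × q matrix B, the acyclicity constraint h(B) = trace(exp(B ∘ B)) − q equals 0 if and only if B ∘ B (the entrywise/Hadamard square of B) is nilpotent. -/
open Matrix
open scoped Matrix

attribute [local instance] Matrix.linftyOpNormedRing Matrix.linftyOpNormedAlgebra

namespace TraceExpAux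

variable {n : ℕ}

lemma pow_entry_nonneg (A : Matrix (Fin n) (Fin n) ℝ) (hA : ∀ i j, 0 ≤ A i j) :
    ∀ (k : ℕ) (i j : Fin n), 0 ≤ (A ^ k) i j := by
  intro k
  induction k with
  | zero =>
    intro i j
    rw [pow_zero]
    by_cases h : i = j
    · subst h; simp [Matrix.one_apply_eq]
    · simp [Matrix.one_apply_ne h]
  | succ m ih =>
    intro i j
    rw [pow_succ, Matrix.mul_apply]
    exact Finset.sum_nonneg fun k _ => mul_nonneg (ih i k) (hA k j)

lemma path_le (A : Matrix (Fin n) (Fin n) ℝ) (hA : ∀ i j, 0 ≤ A i j) (f : ℕ → Fin n) :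
    ∀ m : ℕ, (∏ t ∈ Finset.range m, A (f t) (f (t + 1))) ≤ (A ^ m) (f 0) (f m) := by
  intro m
  induction m with
  | zero => simp [Matrix.one_apply_eq]
  | succ m ih =>
    rw [Finset.prod_range_succ, pow_succ, Matrix.mul_apply]
    calc (∏ t ∈ Finset.range m, A (f t) (f (t + 1))) * A (f m) (f (m + 1))
        ≤ (A ^ m) (f 0) (f m) * A (f m) (f (m + 1)) :=
          mul_le_mul_of_nonneg_right ih (hA _ _)
      _ ≤ ∑ k, (A ^ m) (f 0) k * A k (f (m + 1)) :=
          Finset.single_le_sum (f := fun k => (A ^ m) (f 0) k * A k (f (m + 1)))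
            (fun k _ => mul_nonneg (pow_entry_nonneg A hA m (f 0) k) (hA _ _))
            (Finset.mem_univ (f m))

lemma exists_path (A : Matrix (Fin n) (Fin n) ℝ) :
    ∀ (m : ℕ) (i j : Fin n), (A ^ m) i j ≠ 0 →
      ∃ f : ℕ → Fin n, f 0 = i ∧ f m = j ∧ ∀ t < m, A (f t) (f (t + 1)) ≠ 0 := by
  intro m
  induction m with
  | zero =>
    intro i j h
    have hij : i = j := by
      by_contra hij
      rw [pow_zero, Matrix.one_apply_ne hij] at h
      exact h rfl
    exact ⟨fun _ => i, rfl, hij, fun t ht => absurd ht (Nat.not_lt_zero t)⟩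
  | succ m ih =>
    intro i j h
    rw [pow_succ, Matrix.mul_apply] at h
    obtain ⟨k, -, hk⟩ := Finset.exists_ne_zero_of_sum_ne_zero h
    obtain ⟨h1, h2⟩ := mul_ne_zero_iff.mp hk
    obtain ⟨f, hf0, hfm, hstep⟩ := ih i k h1
    refine ⟨fun t => if t ≤ m then f t else j, by simp [hf0], by simp, ?_⟩
    intro t ht
    rcases Nat.lt_or_ge t m with h' | h'
    · simpa [Nat.le_of_lt h', Nat.succ_le_of_lt h'] using hstep t h'
    · have ht' : t = m := by omega
      subst ht'
      simpa [hfm] using h2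

lemma pow_n_eq_zero (A : Matrix (Fin n) (Fin n) ℝ) (hA : ∀ i j, 0 ≤ A i j)
    (h : ∀ k, 1 ≤ k → ∀ i, (A ^ k) i i = 0) : A ^ n = 0 := by
  ext i j
  simp only [Matrix.zero_apply]
  by_contra hne
  obtain ⟨f, hf0, hfn, hstep⟩ := exists_path A n i j hne
  obtain ⟨a, b, hab, heq⟩ :=
    Fintype.exists_ne_map_eq_of_card_lt (fun t : Fin (n + 1) => f t) (by simp)
  -- WLOG a < b
  have key : ∀ s t : ℕ, s < t → t ≤ n → f s = f t → False := by
    intro s t hst htn hfe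
    have hk1 : 1 ≤ t - s := by omega
    have hle := path_le A hA (fun u => f (s + u)) (t - s)
    have hst' : s + (t - s) = t := by omega
    rw [hst'] at hle
    simp only [Nat.add_zero] at hle
    rw [← hfe] at hle
    rw [h (t - s) hk1 (f s)] at hle
    have hpos : 0 < ∏ u ∈ Finset.range (t - s), A (f (s + u)) (f (s + u + 1)) := by
      refine Finset.prod_pos fun u hu => ?_
      rw [Finset.mem_range] at hu
      exact lt_of_le_of_ne (hA _ _) (Ne.symm (hstep (s + u) (by omega)))
    have : (∏ u ∈ Finset.range (t - s), A (f (s + u)) (f (s + u + 1))) ≤ 0 := by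
      refine le_trans (le_of_eq ?_) hle
      refine Finset.prod_congr rfl fun u _ => ?_
      congr 1
    exact absurd (lt_of_lt_of_le hpos this) (lt_irrefl 0)
  rcases Ne.lt_or_gt hab with hlt | hlt
  · exact key a b (Fin.lt_iff_val_lt_val.mp hlt) (Nat.lt_succ_iff.mp b.isLt) heq
  · exact key b a (Fin.lt_iff_val_lt_val.mp hlt) (Nat.lt_succ_iff.mp a.isLt) heq.symm

lemma trace_pow_nonneg (A : Matrix (Fin n) (Fin n) ℝ) (hA : ∀ i j, 0 ≤ A i j) (k : ℕ) :
    0 ≤ (A ^ k).trace :=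
  Finset.sum_nonneg fun i _ => pow_entry_nonneg A hA k i i

lemma isNilpotent_of_trace_pow (A : Matrix (Fin n) (Fin n) ℝ) (hA : ∀ i j, 0 ≤ A i j)
    (h : ∀ k, 1 ≤ k → (A ^ k).trace = 0) : IsNilpotent A := by
  refine ⟨n, pow_n_eq_zero A hA ?_⟩
  intro k hk i
  have hsum : ∑ i, (A ^ k) i i = 0 := h k hk
  have := (Finset.sum_eq_zero_iff_of_nonneg
    (fun j _ => pow_entry_nonneg A hA k j j)).mp hsum
  exact this i (Finset.mem_univ i)

lemma trace_pow_of_isNilpotent (A : Matrix (Fin n) (Fin n) ℝ) (hnil : IsNilpotent A) :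
    ∀ k, 1 ≤ k → (A ^ k).trace = 0 := by
  intro k hk
  obtain ⟨m, hm⟩ := hnil
  have hpow : IsNilpotent (A ^ k) := ⟨m, by rw [← pow_mul, mul_comm, pow_mul, hm, zero_pow]; omega⟩
  exact (Matrix.isNilpotent_trace_of_isNilpotent hpow).eq_zero

lemma trace_exp_eq_tsum (A : Matrix (Fin n) (Fin n) ℝ) :
    (NormedSpace.exp A).trace = ∑' k : ℕ, ((k.factorial : ℝ))⁻¹ * (A ^ k).trace := by
  let g : Matrix (Fin n) (Fin n) ℝ →L[ℝ] ℝ :=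
    LinearMap.toContinuousLinearMap (Matrix.traceLinearMap (Fin n) ℝ ℝ)
  have hs : Summable (fun k : ℕ => ((k.factorial : ℝ))⁻¹ • A ^ k) :=
    NormedSpace.expSeries_summable' A
  have h1 : (NormedSpace.exp A).trace
      = g (∑' k : ℕ, ((k.factorial : ℝ))⁻¹ • A ^ k) := by
    rw [NormedSpace.exp_eq_tsum (𝕂 := ℝ)]
    rfl
  rw [h1, g.map_tsum hs]
  refine tsum_congr fun k => ?_
  show (((k.factorial : ℝ))⁻¹ • A ^ k).trace = _
  rw [Matrix.trace_smul, smul_eq_mul]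

lemma summable_trace_series (A : Matrix (Fin n) (Fin n) ℝ) :
    Summable (fun k : ℕ => ((k.factorial : ℝ))⁻¹ * (A ^ k).trace) := by
  let g : Matrix (Fin n) (Fin n) ℝ →L[ℝ] ℝ :=
    LinearMap.toContinuousLinearMap (Matrix.traceLinearMap (Fin n) ℝ ℝ)
  have hs : Summable (fun k : ℕ => ((k.factorial : ℝ))⁻¹ • A ^ k) :=
    NormedSpace.expSeries_summable' A
  have := hs.map g.toLinearMap.toAddMonoidHom g.continuous
  refine this.congr fun k => ?_
  show g (((k.factorial : ℝ))⁻¹ • A ^ k) = _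
  show (((k.factorial : ℝ))⁻¹ • A ^ k).trace = _
  rw [Matrix.trace_smul, smul_eq_mul]

lemma main {n : ℕ} (A : Matrix (Fin n) (Fin n) ℝ) (hA : ∀ i j, 0 ≤ A i j) :
    (NormedSpace.exp A).trace = n ↔ IsNilpotent A := by
  set c : ℕ → ℝ := fun k => ((k.factorial : ℝ))⁻¹ * (A ^ k).trace with hc
  have hcs : Summable c := summable_trace_series A
  have hcnn : ∀ k, 0 ≤ c k := fun k =>
    mul_nonneg (by positivity) (trace_pow_nonneg A hA k)
  have hc0 : c 0 = n := by
    simp [hc, Matrix.trace_one]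
  have hcs' : Summable (fun k => c (k + 1)) := (summable_nat_add_iff 1).mpr hcs
  have hkey : (NormedSpace.exp A).trace = n ↔ ∀ k, 1 ≤ k → (A ^ k).trace = 0 := by
    rw [trace_exp_eq_tsum A, ← hc]
    rw [Summable.tsum_eq_zero_add hcs, hc0]
    constructor
    · intro h
      have hz : ∑' k : ℕ, c (k + 1) = 0 := by linarith
      intro k hk
      obtain ⟨m, rfl⟩ := Nat.exists_eq_add_of_le hk
      have hle : c (1 + m) ≤ 0 := by
        rw [← hz]
        have := Summable.le_tsum hcs' m (fun j _ => hcnn (j + 1))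
        simpa [Nat.add_comm] using this
      have hcz : c (1 + m) = 0 := le_antisymm hle (hcnn _)
      have hfac : ((1 + m).factorial : ℝ)⁻¹ ≠ 0 := by positivity
      rcases mul_eq_zero.mp hcz with h' | h'
      · exact absurd h' hfac
      · exact h'
    · intro h
      have : ∀ k : ℕ, c (k + 1) = 0 := fun k => by
        simp [hc, h (k + 1) (Nat.succ_le_succ (Nat.zero_le k))]
      rw [tsum_congr this, tsum_zero, add_zero]
  rw [hkey]
  exact ⟨isNilpotent_of_trace_pow A hA, trace_pow_of_isNilpotent A⟩

end TraceExpAux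

/-- For a real square matrix `A` with nonnegative entries, `trace (exp A) = n` iff `A` is
nilpotent. In particular, for any real `q × q` matrix `B`, the acyclicity constraint
`h(B) = trace (exp (B ∘ B)) − q` vanishes iff the Hadamard square `B ∘ B` is nilpotent. -/
theorem trace_exp_eq_iff_isNilpotent {n : ℕ} (A : Matrix (Fin n) (Fin n) ℝ)
    (hA : ∀ i j, 0 ≤ A i j) :
    ((NormedSpace.exp A).trace = n ↔ IsNilpotent A) ∧
      ∀ (q : ℕ) (B : Matrix (Fin q) (Fin q) ℝ),
        (NormedSpace.exp (B ⊙ B)).trace - q = 0 ↔ IsNilpotent (B ⊙ B) := by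
  refine ⟨TraceExpAux.main A hA, fun q B => ?_⟩
  rw [sub_eq_zero]
  exact TraceExpAux.main (B ⊙ B) fun i j => by
    rw [Matrix.hadamard_apply]; exact mul_self_nonneg _
end

section
/- Let A be a real n × n matrix all of whose entries are nonnegative. Then A is nilpotent if and only if there exists a permutation σ of Fin n such that A i j = 0 whenever σ i ≤ σ j (i.e., A is permutation-similar to a strictly lower triangular matrix, equivalently the directed graph with an edge i → j whenever A i j ≠ 0 is acyclic). -/
open Matrix

/-- Entries of powers of an entrywise-nonnegative matrix are nonnegative. -/
lemma pow_entry_nonneg {n : ℕ} (A : Matrix (Fin n) (Fin n) ℝ)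
    (hA : ∀ i j, 0 ≤ A i j) : ∀ k i j, 0 ≤ (A ^ k) i j := by
  intro k
  induction k with
  | zero =>
    intro i j
    simp only [pow_zero, Matrix.one_apply]
    split <;> norm_num
  | succ k ih =>
    intro i j
    rw [pow_succ, Matrix.mul_apply]
    exact Finset.sum_nonneg fun l _ => mul_nonneg (ih i l) (hA l j)

/-- Positive path along iterates of a choice function. -/
lemma pow_pos_path {n : ℕ} (A : Matrix (Fin n) (Fin n) ℝ)
    (hA : ∀ i j, 0 ≤ A i j) (f : Fin n → Fin n) (hf : ∀ i, 0 < A i (f i)) :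
    ∀ k x, 0 < (A ^ k) x (f^[k] x) := by
  intro k
  induction k with
  | zero => intro x; simp [Matrix.one_apply]
  | succ k ih =>
    intro x
    rw [pow_succ', Matrix.mul_apply]
    have key : 0 < A x (f x) * (A ^ k) (f x) (f^[k] (f x)) :=
      mul_pos (hf x) (ih (f x))
    have hle : A x (f x) * (A ^ k) (f x) (f^[k + 1] x)
        ≤ ∑ l, A x l * (A ^ k) l (f^[k + 1] x) := by
      apply Finset.single_le_sum (f := fun l => A x l * (A ^ k) l (f^[k + 1] x))
        (fun l _ => mul_nonneg (hA x l) (pow_entry_nonneg A hA k l _))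
        (Finset.mem_univ (f x))
    have hiter : f^[k + 1] x = f^[k] (f x) := Function.iterate_succ_apply f k x
    rw [hiter] at hle ⊢
    exact lt_of_lt_of_le key hle

/-- Diagonal of a power dominates power of the diagonal for nonneg matrices. -/
lemma diag_pow_le {n : ℕ} (B : Matrix (Fin n) (Fin n) ℝ)
    (hB : ∀ i j, 0 ≤ B i j) : ∀ t x, (B x x) ^ t ≤ (B ^ t) x x := by
  intro t
  induction t with
  | zero => intro x; simp
  | succ t ih =>
    intro x
    rw [pow_succ' B t]
    have h0 : (B * B ^ t) x x = ∑ l, B x l * (B ^ t) l x := Matrix.mul_apply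
    rw [h0]
    have h1 : B x x * (B x x) ^ t ≤ B x x * (B ^ t) x x :=
      mul_le_mul_of_nonneg_left (ih x) (hB x x)
    have h2 : B x x * (B ^ t) x x ≤ ∑ l, B x l * (B ^ t) l x :=
      Finset.single_le_sum (f := fun l => B x l * (B ^ t) l x)
        (fun l _ => mul_nonneg (hB x l) (pow_entry_nonneg B hB t l x))
        (Finset.mem_univ x)
    calc (B x x) ^ (t + 1) = B x x * (B x x) ^ t := by ring
      _ ≤ ∑ l, B x l * (B ^ t) l x := le_trans h1 h2


/-- A nonzero-size nilpotent nonnegative matrix has a zero row (a "sink"). -/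
lemma exists_zero_row {n : ℕ} (A : Matrix (Fin (n + 1)) (Fin (n + 1)) ℝ)
    (hA : ∀ i j, 0 ≤ A i j) (hnil : IsNilpotent A) :
    ∃ i, ∀ j, A i j = 0 := by
  by_contra hcon
  push_neg at hcon
  -- every row has a positive entry
  have hf : ∀ i, ∃ j, 0 < A i j := by
    intro i
    obtain ⟨j, hj⟩ := hcon i
    exact ⟨j, lt_of_le_of_ne (hA i j) (Ne.symm hj)⟩
  choose f hfpos using hf
  -- find a cycle by pigeonhole
  obtain ⟨m, hm⟩ := hnil
  have hcard : Fintype.card (Fin (n + 1)) < Fintype.card (Fin (n + 2)) := by simp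
  obtain ⟨a, b, hab, heq⟩ :=
    Fintype.exists_ne_map_eq_of_card_lt (fun a : Fin (n + 2) => f^[(a : ℕ)] 0) hcard
  wlog hlt : (a : ℕ) < (b : ℕ) generalizing a b
  · exact this b a hab.symm heq.symm
      (lt_of_le_of_ne (not_lt.mp hlt) (fun h => hab (Fin.ext h.symm)))
  set x := f^[(a : ℕ)] 0 with hx
  set k := (b : ℕ) - (a : ℕ) with hk
  have hkpos : 0 < k := Nat.sub_pos_of_lt hlt
  have hcyc : f^[k] x = x := by
    rw [hx, ← Function.iterate_add_apply]
    have : k + (a : ℕ) = (b : ℕ) := Nat.sub_add_cancel hlt.le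
    rw [this]; exact heq.symm
  -- diagonal entry of A^k is positive
  have hpos : 0 < (A ^ k) x x := by
    have := pow_pos_path A hA f hfpos k x
    rwa [hcyc] at this
  -- but A^(k*m') = 0 for suitable power
  have hm1 : m ≠ 0 := by
    intro h
    rw [h, pow_zero] at hm
    have := congrFun (congrFun hm x) x
    simp [Matrix.one_apply] at this
  have hzero : (A ^ k) ^ m = 0 := by
    rw [← pow_mul]
    have hle : m ≤ k * m := Nat.le_mul_of_pos_left m hkpos
    obtain ⟨c, hc⟩ := Nat.exists_eq_add_of_le hle
    rw [hc, pow_add, hm, zero_mul]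
  have hdiag : ((A ^ k) x x) ^ m ≤ ((A ^ k) ^ m) x x :=
    diag_pow_le (A ^ k) (pow_entry_nonneg A hA k) m x
  rw [hzero] at hdiag
  simp only [Matrix.zero_apply] at hdiag
  exact absurd hdiag (not_le.mpr (pow_pos hpos m))

/-- Powers of a principal submatrix are dominated entrywise by powers of the matrix. -/
lemma submatrix_pow_le {n m : ℕ} (A : Matrix (Fin m) (Fin m) ℝ)
    (hA : ∀ i j, 0 ≤ A i j) (e : Fin n → Fin m) (he : Function.Injective e) :
    ∀ k i j, ((A.submatrix e e) ^ k) i j ≤ (A ^ k) (e i) (e j) := by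
  intro k
  induction k with
  | zero =>
    intro i j
    simp only [pow_zero, Matrix.one_apply]
    by_cases h : i = j
    · simp [h]
    · rw [if_neg h, if_neg (fun hc => h (he hc))]
  | succ k ih =>
    intro i j
    rw [pow_succ', pow_succ', Matrix.mul_apply, Matrix.mul_apply]
    have hA' : ∀ i j, 0 ≤ A.submatrix e e i j := fun i j => hA _ _
    have step1 : ∑ l, A.submatrix e e i l * ((A.submatrix e e) ^ k) l j
        ≤ ∑ l, A (e i) (e l) * (A ^ k) (e l) (e j) := by
      apply Finset.sum_le_sum
      intro l _
      exact mul_le_mul_of_nonneg_left (ih l j) (hA _ _)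
    have step2 : ∑ l, A (e i) (e l) * (A ^ k) (e l) (e j)
        ≤ ∑ l, A (e i) l * (A ^ k) l (e j) := by
      have himg : ∑ l : Fin n, A (e i) (e l) * (A ^ k) (e l) (e j)
          = ∑ m ∈ Finset.univ.image e, A (e i) m * (A ^ k) m (e j) :=
        (Finset.sum_image (f := fun m => A (e i) m * (A ^ k) m (e j)) (g := e)
          (s := Finset.univ) (fun x _ y _ h => he h)).symm
      rw [himg]
      apply Finset.sum_le_sum_of_subset_of_nonneg (Finset.subset_univ _)
      intro l _ _
      exact mul_nonneg (hA _ _) (pow_entry_nonneg A hA k l _)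
    exact le_trans step1 step2

/-- Forward direction by induction on size. -/
lemma forward_dir : ∀ n (A : Matrix (Fin n) (Fin n) ℝ), (∀ i j, 0 ≤ A i j) →
    IsNilpotent A → ∃ σ : Equiv.Perm (Fin n), ∀ i j, σ i ≤ σ j → A i j = 0 := by
  intro n
  induction n with
  | zero => intro A _ _; exact ⟨1, fun i => i.elim0⟩
  | succ n ih =>
    intro A hA hnil
    obtain ⟨i₀, hi₀⟩ := exists_zero_row A hA hnil
    set e : Fin n → Fin (n + 1) := i₀.succAbove with he
    have heinj : Function.Injective e := Fin.succAbove_right_injective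
    set A' := A.submatrix e e with hA'
    have hA'nonneg : ∀ i j, 0 ≤ A' i j := fun i j => hA _ _
    have hA'nil : IsNilpotent A' := by
      obtain ⟨m, hm⟩ := hnil
      refine ⟨m, ?_⟩
      ext i j
      have h1 := submatrix_pow_le A hA e heinj m i j
      rw [hm] at h1
      simp only [Matrix.zero_apply] at h1 ⊢
      exact le_antisymm h1 (pow_entry_nonneg A' hA'nonneg m i j)
    obtain ⟨σ', hσ'⟩ := ih A' hA'nonneg hA'nil
    refine ⟨(finSuccEquiv' i₀).trans ((Equiv.optionCongr σ').trans (finSuccEquiv n).symm), ?_⟩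
    intro i j hle
    by_cases hi : i = i₀
    · rw [hi]; exact hi₀ j
    · obtain ⟨a, ha⟩ := Fin.exists_succAbove_eq hi
      have hσi : ((finSuccEquiv' i₀).trans ((Equiv.optionCongr σ').trans
          (finSuccEquiv n).symm)) i = (σ' a).succ := by
        simp [← ha, finSuccEquiv'_succAbove, finSuccEquiv_symm_some]
      by_cases hj : j = i₀
      · exfalso
        have hσj : ((finSuccEquiv' i₀).trans ((Equiv.optionCongr σ').trans
            (finSuccEquiv n).symm)) j = 0 := by
          simp [hj, finSuccEquiv'_at, finSuccEquiv_symm_none]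
        rw [hσi, hσj] at hle
        exact absurd hle (by simp [Fin.le_def])
      · obtain ⟨b, hb⟩ := Fin.exists_succAbove_eq hj
        have hσj : ((finSuccEquiv' i₀).trans ((Equiv.optionCongr σ').trans
            (finSuccEquiv n).symm)) j = (σ' b).succ := by
          simp [← hb, finSuccEquiv'_succAbove, finSuccEquiv_symm_some]
        rw [hσi, hσj, Fin.succ_le_succ_iff] at hle
        have := hσ' a b hle
        rw [← ha, ← hb]
        exact this

/-- A real square matrix with nonnegative entries is nilpotent iff it is
permutation-similar to a strictly lower triangular matrix (i.e., the associated directed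
graph is acyclic, admitting a topological ordering). -/
theorem isNilpotent_iff_strictly_lower_triangularizable {n : ℕ}
    (A : Matrix (Fin n) (Fin n) ℝ) (hA : ∀ i j, 0 ≤ A i j) :
    IsNilpotent A ↔ ∃ σ : Equiv.Perm (Fin n), ∀ i j, σ i ≤ σ j → A i j = 0 := by
  constructor
  · exact forward_dir n A hA
  · rintro ⟨σ, hσ⟩
    refine ⟨n, ?_⟩
    have key : ∀ k i j, (A ^ k) i j ≠ 0 → (σ j : ℕ) + k ≤ (σ i : ℕ) := by
      intro k
      induction k with
      | zero =>
        intro i j h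
        simp only [pow_zero, Matrix.one_apply, ne_eq, ite_eq_right_iff, not_forall] at h
        rw [h.1]; simp
      | succ k ihk =>
        intro i j h
        rw [pow_succ', Matrix.mul_apply] at h
        obtain ⟨l, -, hl⟩ := Finset.exists_ne_zero_of_sum_ne_zero h
        have h1 : A i l ≠ 0 := fun hc => hl (by rw [hc, zero_mul])
        have h2 : (A ^ k) l j ≠ 0 := fun hc => hl (by rw [hc, mul_zero])
        have hlt : (σ l : ℕ) < (σ i : ℕ) := by
          by_contra hc
          push_neg at hc
          exact h1 (hσ i l (Fin.le_def.mpr hc))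
        have := ihk l j h2
        omega
    ext i j
    simp only [Matrix.zero_apply]
    by_contra h
    have := key n i j h
    have : (σ i : ℕ) < n := (σ i).isLt
    omega
end
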